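/- Let X and Y be Banach spaces, let T : X → Y be a bounded linear operator that is bounded below (i.e., there is C > 0 with ‖Tx‖ ≥ C‖x‖ for all x), and let C ⊆ X be a bounded set. If x₀ ∈ C satisfies ‖T x₀‖ = sup {‖Tx‖ : x ∈ C} and T x₀ is a locally uniformly rotund point of Y, then for every y* ∈ Y* with ‖y*‖ = 1 and Re y*(T x₀) = sup {‖Tx‖ : x ∈ C}, the functional T* y* strongly exposes C at x₀. -/

import Mathlib

open Filter Topology RCLike Bornology

/-- `f` strongly exposes the bounded set `C` at `x₀`. -/
def StronglyExposes {𝕜 X : Type} [RCLike 𝕜] [NormedAddCommGroup X] [NormedSpace 𝕜 X]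
    (f : X →L[𝕜] 𝕜) (C : Set X) (x₀ : X) : Prop :=
  x₀ ∈ C ∧ (∀ x ∈ C, re (f x) ≤ re (f x₀)) ∧
    ∀ u : ℕ → X, (∀ n, u n ∈ C) →
      Tendsto (fun n => re (f (u n))) atTop (𝓝 (re (f x₀))) →
      Tendsto u atTop (𝓝 x₀)

/-- `f` strongly exposes the closed unit ball at `x₀`. -/
def StronglyExposesBall {𝕜 X : Type} [RCLike 𝕜] [NormedAddCommGroup X] [NormedSpace 𝕜 X]
    (f : X →L[𝕜] 𝕜) (x₀ : X) : Prop :=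
  ‖x₀‖ ≤ 1 ∧ re (f x₀) = ‖f‖ ∧
    ∀ u : ℕ → X, (∀ n, ‖u n‖ ≤ 1) →
      Tendsto (fun n => re (f (u n))) atTop (𝓝 ‖f‖) →
      Tendsto u atTop (𝓝 x₀)

/-- `T` absolutely strongly exposes the closed unit ball at `x₀`. -/
def AbsStronglyExposes {𝕜 X Y : Type} [RCLike 𝕜] [NormedAddCommGroup X] [NormedSpace 𝕜 X]
    [NormedAddCommGroup Y] [NormedSpace 𝕜 Y] (T : X →L[𝕜] Y) (x₀ : X) : Prop :=
  ‖x₀‖ ≤ 1 ∧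
    ∀ u : ℕ → X, (∀ n, ‖u n‖ ≤ 1) →
      Tendsto (fun n => ‖T (u n)‖) atTop (𝓝 ‖T‖) →
      ∃ θ : ℕ → 𝕜, (∀ n, ‖θ n‖ = 1) ∧ Tendsto (fun n => θ n • u n) atTop (𝓝 x₀)

/-- A locally uniformly rotund (LUR) point of a normed space. -/
def LURPoint {Y : Type} [NormedAddCommGroup Y] (y₀ : Y) : Prop :=
  ∀ u : ℕ → Y, (∀ n, ‖u n‖ ≤ ‖y₀‖) →
    Tendsto (fun n => ‖u n + y₀‖) atTop (𝓝 (2 * ‖y₀‖)) →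
    Tendsto u atTop (𝓝 y₀)

theorem stmt0 {𝕜 X Y : Type} [RCLike 𝕜]
    [NormedAddCommGroup X] [NormedSpace 𝕜 X] [CompleteSpace X]
    [NormedAddCommGroup Y] [NormedSpace 𝕜 Y] [CompleteSpace Y]
    (T : X →L[𝕜] Y) (c : ℝ) (hc : 0 < c) (hbelow : ∀ x, c * ‖x‖ ≤ ‖T x‖)
    (C : Set X) (hC : IsBounded C)
    (x₀ : X) (hx₀ : x₀ ∈ C) (hmax : ∀ x ∈ C, ‖T x‖ ≤ ‖T x₀‖)
    (hLUR : LURPoint (T x₀))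
    (g : Y →L[𝕜] 𝕜) (hg : ‖g‖ = 1) (hre : re (g (T x₀)) = ‖T x₀‖) :
    StronglyExposes (g.comp T) C x₀ := by
  have key : ∀ y : Y, re (g y) ≤ ‖y‖ := fun y => by
    calc re (g y) ≤ ‖g y‖ := RCLike.re_le_norm _
    _ ≤ ‖g‖ * ‖y‖ := g.le_opNorm y
    _ = ‖y‖ := by rw [hg, one_mul]
  refine ⟨hx₀, fun x hx => ?_, fun u hu htend => ?_⟩
  · simp only [ContinuousLinearMap.comp_apply]
    rw [hre]
    exact (key _).trans (hmax x hx)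
  · simp only [ContinuousLinearMap.comp_apply] at htend
    rw [hre] at htend
    have hub : ∀ n, ‖T (u n)‖ ≤ ‖T x₀‖ := fun n => hmax _ (hu n)
    have h1 : Tendsto (fun n => ‖T (u n) + T x₀‖) atTop (𝓝 (2 * ‖T x₀‖)) := by
      have hlo : Tendsto (fun n => re (g (T (u n))) + ‖T x₀‖) atTop (𝓝 (2 * ‖T x₀‖)) := by
        have := htend.add (tendsto_const_nhds :
          Tendsto (fun _ : ℕ => ‖T x₀‖) atTop (𝓝 ‖T x₀‖))
        simpa [two_mul] using this
      refine tendsto_of_tendsto_of_tendsto_of_le_of_le hlo tendsto_const_nhds ?_ ?_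
      · intro n
        calc re (g (T (u n))) + ‖T x₀‖ = re (g (T (u n) + T x₀)) := by
              rw [map_add, map_add, ← hre]
        _ ≤ ‖T (u n) + T x₀‖ := key _
      · intro n
        calc ‖T (u n) + T x₀‖ ≤ ‖T (u n)‖ + ‖T x₀‖ := norm_add_le _ _
        _ ≤ 2 * ‖T x₀‖ := by linarith [hub n]
    have h2 : Tendsto (fun n => T (u n)) atTop (𝓝 (T x₀)) := hLUR _ hub h1
    rw [tendsto_iff_norm_sub_tendsto_zero] at h2 ⊢
    refine squeeze_zero (g := fun n => c⁻¹ * ‖T (u n) - T x₀‖) (fun n => norm_nonneg _) (fun n => ?_) ?_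
    · have h := hbelow (u n - x₀)
      rw [map_sub] at h
      rw [le_inv_mul_iff₀ hc]
      linarith
    · simpa using h2.const_mul c⁻¹
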